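/- Let $u$ be a bounded measurable function on $(0,1)$ taking only two distinct values $a \neq b$, piecewise constant on intervals with break points $x_j = e^{-2j}$, alternating between $a$ and $b$ on consecutive intervals. Then for the modulus of smoothness $\omega_1(u,t)_2$ there is $c > 0$ such that for all sufficiently small $t > 0$, $\omega_1(u,t)_2^2 \geq c\, |a-b|^2\, t\, |\ln t|$. In particular $\sup_{t>0} t^{-1/2}\omega_1(u,t)_2 = \infty$, so $u \notin B^{1/2}_{2,\infty}(0,1)$. -/

import Mathlib

set_option maxHeartbeats 1000000


open MeasureTheory Set

/-- Canonical measurable representative of the alternating piecewise constant function. -/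
noncomputable def vpc (a b : ℝ) : ℝ → ℝ := fun x => if Even ⌊Real.log x / (-2)⌋ then a else b

lemma vpc_meas (a b : ℝ) : Measurable (vpc a b) := by
  unfold vpc
  refine Measurable.ite ?_ measurable_const measurable_const
  exact (Int.measurable_floor.comp (Real.measurable_log.div_const (-2)))
    (show MeasurableSet {n : ℤ | Even n} from trivial)

lemma vpc_eq (a b : ℝ) (j : ℕ) (x : ℝ)
    (hx : x ∈ Ioo (Real.exp (-(2*((j:ℝ)+1)))) (Real.exp (-(2*(j:ℝ))))) :
    vpc a b x = if Even j then a else b := by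
  have hx0 : 0 < x := lt_trans (Real.exp_pos _) hx.1
  have h1 : -(2*((j:ℝ)+1)) < Real.log x := by
    have := Real.log_lt_log (Real.exp_pos _) hx.1
    rwa [Real.log_exp] at this
  have h2 : Real.log x < -(2*(j:ℝ)) := by
    have := Real.log_lt_log hx0 hx.2
    rwa [Real.log_exp] at this
  have hre : Real.log x / (-2) = -Real.log x / 2 := by ring
  have hfl : ⌊Real.log x / (-2)⌋ = (j : ℤ) := by
    rw [Int.floor_eq_iff, hre]
    push_cast
    constructor
    · linarith
    · linarith
  unfold vpc
  rw [hfl]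
  simp [Int.even_coe_nat]

lemma mem_piece (x : ℝ) (hx : x ∈ Ioo (0:ℝ) 1)
    (hne : ∀ j : ℕ, x ≠ Real.exp (-(2*((j:ℝ)+1)))) :
    ∃ j : ℕ, x ∈ Ioo (Real.exp (-(2*((j:ℝ)+1)))) (Real.exp (-(2*(j:ℝ)))) := by
  have hx0 := hx.1
  have hlog : Real.log x < 0 := Real.log_neg hx.1 hx.2
  set y := -Real.log x with hy
  have hy0 : 0 < y := by rw [hy]; linarith
  set j := ⌊y/2⌋₊ with hj
  have h1 : (j:ℝ) ≤ y/2 := Nat.floor_le (by positivity)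
  have h2 : y/2 < (j:ℝ) + 1 := Nat.lt_floor_add_one _
  have hxe : x = Real.exp (-y) := by rw [hy, neg_neg, Real.exp_log hx0]
  have hstrict : 2*(j:ℝ) < y := by
    rcases lt_or_eq_of_le h1 with h | h
    · linarith
    · exfalso
      have hyj : y = 2*(j:ℝ) := by linarith
      have hj1 : 1 ≤ j := by
        by_contra hc
        push_neg at hc
        interval_cases j
        · rw [hyj] at hy0; norm_num at hy0
      apply hne (j-1)
      rw [hxe, hyj]
      congr 1
      have hcast : ((j-1:ℕ):ℝ) = (j:ℝ) - 1 := by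
        rw [Nat.cast_sub hj1]; norm_num
      rw [hcast]; ring
  refine ⟨j, ?_, ?_⟩
  · rw [hxe]; exact Real.exp_lt_exp.2 (by linarith)
  · rw [hxe]; exact Real.exp_lt_exp.2 (by linarith)

lemma key_lower (a b : ℝ) (u : ℝ → ℝ)
    (hu : ∀ j : ℕ, ∀ x ∈ Ioo (Real.exp (-(2*((j:ℝ)+1)))) (Real.exp (-(2*(j:ℝ)))),
        u x = if Even j then a else b)
    (t : ℝ) (ht0 : 0 < t) (ht1 : t < Real.exp (-8:ℝ)) :
    (1/4 : ℝ) * (a-b)^2 * t * |Real.log t| ≤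
      ∫ x in Ioo (0:ℝ) (1-t), (u (x+t) - u x)^2 := by
  set v := vpc a b with hvdef
  have hvm := vpc_meas a b
  set L := -Real.log t with hLdef
  have hL8 : 8 < L := by
    have := Real.log_lt_log ht0 ht1
    rw [Real.log_exp] at this
    rw [hLdef]; linarith
  have habs : |Real.log t| = L := by
    rw [hLdef, abs_of_neg (by linarith : Real.log t < 0)]
  have hte : t = Real.exp (-L) := by rw [hLdef, neg_neg, Real.exp_log ht0]
  have hexp2 : (2:ℝ) ≤ Real.exp 2 := by
    have := Real.add_one_le_exp (2:ℝ); linarith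
  have hmul2 : Real.exp (-2:ℝ) * Real.exp 2 = 1 := by
    rw [← Real.exp_add]; norm_num
  have he2 : Real.exp (-2:ℝ) ≤ 1/2 := by
    have h1 : Real.exp (-2:ℝ) * 2 ≤ Real.exp (-2:ℝ) * Real.exp 2 :=
      mul_le_mul_of_nonneg_left hexp2 (Real.exp_pos _).le
    rw [hmul2] at h1
    linarith
  -- the number of useful break points
  set N := ⌊L/2⌋₊ - 1 with hNdef
  have hfl1 : 4 ≤ ⌊L/2⌋₊ := Nat.le_floor (by push_cast; linarith)
  have hNc : (N:ℝ) = (⌊L/2⌋₊:ℝ) - 1 := by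
    rw [hNdef, Nat.cast_sub (by omega : 1 ≤ ⌊L/2⌋₊)]; norm_num
  have hfl_le : (⌊L/2⌋₊:ℝ) ≤ L/2 := Nat.floor_le (by linarith)
  have hfl_gt : L/2 < (⌊L/2⌋₊:ℝ) + 1 := Nat.lt_floor_add_one _
  have h2N : 2*(N:ℝ) ≤ L - 2 := by rw [hNc]; linarith
  have hNge : L/4 ≤ (N:ℝ) := by rw [hNc]; linarith
  have hN1 : 1 ≤ N := by omega
  set E : ℕ → Set ℝ :=
    fun j => Ioo (Real.exp (-(2*(j:ℝ))) - t) (Real.exp (-(2*(j:ℝ)))) with hEdef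
  have hEmeas : ∀ j : ℕ, MeasurableSet (E j) := by
    intro j; rw [hEdef]; exact measurableSet_Ioo
  have hjt : ∀ j : ℕ, j ≤ N → t ≤ Real.exp (-(2*(j:ℝ)) - 2) := by
    intro j hj
    rw [hte]
    apply Real.exp_le_exp.2
    have : (j:ℝ) ≤ (N:ℝ) := Nat.cast_le.2 hj
    linarith
  have hkey2 : ∀ j : ℕ, Real.exp (-(2*(j:ℝ)) - 2) ≤ Real.exp (-(2*(j:ℝ))) / 2 := by
    intro j
    have hs : Real.exp (-(2*(j:ℝ)) - 2) = Real.exp (-(2*(j:ℝ))) * Real.exp (-2:ℝ) := by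
      rw [← Real.exp_add]; ring_nf
    rw [hs]
    have hp := Real.exp_pos (-(2*(j:ℝ)))
    nlinarith
  have hEI : ∀ j : ℕ, j ≤ N →
      E j ⊆ Ioo (Real.exp (-(2*((j:ℝ)+1)))) (Real.exp (-(2*(j:ℝ)))) := by
    intro j hj x hx
    rw [hEdef] at hx
    refine ⟨?_, hx.2⟩
    have harg : -(2*((j:ℝ)+1)) = -(2*(j:ℝ)) - 2 := by ring
    rw [harg]
    have h1 := hjt j hj
    have h2 := hkey2 j
    have h3 := hx.1
    linarith
  have hvals : ∀ j : ℕ, 1 ≤ j → j ≤ N → ∀ x ∈ E j,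
      (v (x + t) - v x)^2 = (a - b)^2 := by
    intro j hj1 hjN x hx
    have hvx : v x = if Even j then a else b := vpc_eq a b j x (hEI j hjN hx)
    rw [hEdef] at hx
    have hmem : x + t ∈ Ioo (Real.exp (-(2*(((j:ℝ)-1)+1)))) (Real.exp (-(2*((j:ℝ)-1)))) := by
      constructor
      · have harg : -(2*(((j:ℝ)-1)+1)) = -(2*(j:ℝ)) := by ring
        rw [harg]
        have := hx.1; linarith
      · have harg : -(2*((j:ℝ)-1)) = -(2*(j:ℝ)) + 2 := by ring
        rw [harg]
        have h1 := hx.2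
        have h2 := hjt j hjN
        have h3 := hkey2 j
        have h4 : Real.exp (-(2*(j:ℝ))) * Real.exp 2 = Real.exp (-(2*(j:ℝ)) + 2) := by
          rw [← Real.exp_add]
        have h5 := Real.exp_pos (-(2*(j:ℝ)))
        nlinarith [mul_le_mul_of_nonneg_left hexp2 h5.le]
    have hvxt : v (x + t) = if Even (j-1) then a else b := by
      apply vpc_eq a b (j-1) (x+t)
      have hc : ((j - 1 : ℕ) : ℝ) = (j:ℝ) - 1 := by rw [Nat.cast_sub hj1]; norm_num
      rw [hc]
      exact hmem
    have hpar : Even (j-1) ↔ ¬ Even j := by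
      rw [Nat.even_sub hj1]
      simp [Nat.not_even_one]
    rw [hvx, hvxt]
    rcases Nat.even_or_odd j with hj | hj
    · have h' : ¬ Even (j-1) := by rw [hpar]; tauto
      rw [if_pos hj, if_neg h']; ring
    · have hodd : ¬ Even j := Nat.not_even_iff_odd.2 hj
      have h' : Even (j-1) := hpar.2 hodd
      rw [if_neg hodd, if_pos h']
  have hvolE : ∀ j : ℕ, (volume (E j)).toReal = t := by
    intro j
    rw [hEdef]
    simp only [Real.volume_Ioo]
    rw [show Real.exp (-(2*(j:ℝ))) - (Real.exp (-(2*(j:ℝ))) - t) = t by ring,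
      ENNReal.toReal_ofReal ht0.le]
  have hEint : ∀ j : ℕ, 1 ≤ j → j ≤ N →
      ∫ x in E j, (v (x+t) - v x)^2 = t * (a-b)^2 := by
    intro j hj1 hjN
    rw [setIntegral_congr_fun (hEmeas j) (fun x hx => hvals j hj1 hjN x hx),
      setIntegral_const, measureReal_def, hvolE j, smul_eq_mul]
  have hgm : Measurable fun x => (v (x + t) - v x)^2 :=
    ((hvm.comp (measurable_add_const t)).sub hvm).pow_const 2
  have hvb : ∀ y, |v y| ≤ |a| + |b| := by
    intro y
    rw [hvdef]; unfold vpc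
    split_ifs
    · linarith [abs_nonneg b]
    · linarith [abs_nonneg a]
  have hgint : IntegrableOn (fun x => (v (x + t) - v x)^2) (Ioo (0:ℝ) (1-t)) volume := by
    apply Integrable.mono' (g := fun _ => (2*(|a|+|b|))^2)
      (integrableOn_const measure_Ioo_lt_top.ne)
      hgm.aestronglyMeasurable
    filter_upwards with x
    have h1 := abs_le.1 (hvb (x+t))
    have h2 := abs_le.1 (hvb x)
    rw [Real.norm_eq_abs, abs_of_nonneg (sq_nonneg _)]
    nlinarith [h1.1, h1.2, h2.1, h2.2]
  have hUsub : (⋃ j ∈ Finset.Icc 1 N, E j) ⊆ Ioo (0:ℝ) (1-t) := by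
    intro x hx
    simp only [Set.mem_iUnion] at hx
    obtain ⟨j, hj, hxj⟩ := hx
    have hj' := Finset.mem_Icc.1 hj
    rw [hEdef] at hxj
    constructor
    · have h3 := hjt j hj'.2
      have h4 := hkey2 j
      have h5 := Real.exp_pos (-(2*(j:ℝ)))
      have h6 := hxj.1
      linarith
    · have h2 := hxj.2
      have h5 : Real.exp (-(2*(j:ℝ))) ≤ Real.exp (-2:ℝ) := by
        apply Real.exp_le_exp.2
        have h6 : (1:ℝ) ≤ (j:ℝ) := by exact_mod_cast hj'.1
        linarith
      have h9 : Real.exp (-8:ℝ) ≤ Real.exp (-2:ℝ) := Real.exp_le_exp.2 (by norm_num)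
      linarith
  have hdisj : (↑(Finset.Icc 1 N) : Set ℕ).Pairwise (Function.onFun Disjoint E) := by
    have key : ∀ j k : ℕ, j ≤ N → k ≤ N → j < k → Disjoint (E j) (E k) := by
      intro j k hj hk hjk
      rw [Set.disjoint_left]
      intro x hxj hxk
      rw [hEdef] at hxj hxk
      have h1 := hxj.1
      have h2 := hxk.2
      have h3 := hjt j hj
      have h4 := hkey2 j
      have h5 : Real.exp (-(2*(k:ℝ))) ≤ Real.exp (-(2*(j:ℝ)) - 2) := by
        apply Real.exp_le_exp.2
        have : (j:ℝ) + 1 ≤ (k:ℝ) := by exact_mod_cast hjk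
        linarith
      linarith
    intro j hj k hk hjk
    rw [Finset.mem_coe, Finset.mem_Icc] at hj hk
    rcases Nat.lt_or_ge j k with h | h
    · exact key j k hj.2 hk.2 h
    · exact (key k j hk.2 hj.2 (lt_of_le_of_ne h (fun he => hjk he.symm))).symm
  have hbiUnion : ∫ x in ⋃ j ∈ Finset.Icc 1 N, E j, (v (x+t) - v x)^2
      = ∑ j ∈ Finset.Icc 1 N, ∫ x in E j, (v (x+t) - v x)^2 :=
    integral_biUnion_finset (Finset.Icc 1 N) (fun j _ => hEmeas j) hdisj
      (fun j hj => hgint.mono_set ((Set.subset_biUnion_of_mem hj).trans hUsub))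
  have hsum : ∑ j ∈ Finset.Icc 1 N, ∫ x in E j, (v (x+t) - v x)^2
      = (N:ℝ) * (t * (a-b)^2) := by
    rw [Finset.sum_congr rfl
      (fun j hj => hEint j (Finset.mem_Icc.1 hj).1 (Finset.mem_Icc.1 hj).2)]
    rw [Finset.sum_const, Nat.card_Icc, nsmul_eq_mul]
    norm_num
  have hstep : ∫ x in ⋃ j ∈ Finset.Icc 1 N, E j, (v (x+t) - v x)^2
      ≤ ∫ x in Ioo (0:ℝ) (1-t), (v (x+t) - v x)^2 :=
    setIntegral_mono_set hgint (Filter.Eventually.of_forall (fun x => sq_nonneg _))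
      (HasSubset.Subset.eventuallyLE hUsub)
  -- replace u by v a.e.
  set C := Set.range (fun j : ℕ => Real.exp (-(2*((j:ℝ)+1)))) with hCdef
  have hC : volume C = 0 := (Set.countable_range _).measure_zero _
  have huv : ∀ y, y ∈ Ioo (0:ℝ) 1 → y ∉ C → u y = v y := by
    intro y hy hyC
    obtain ⟨j, hj⟩ := mem_piece y hy (fun j hne => hyC ⟨j, hne.symm⟩)
    rw [hu j y hj, hvdef, vpc_eq a b j y hj]
  have hae1 : ∀ᵐ x : ℝ, x ∉ C := measure_eq_zero_iff_ae_notMem.1 hC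
  have hae2 : ∀ᵐ x : ℝ, x + t ∉ C := by
    have h0 : volume ((fun x => x + t) ⁻¹' C) = 0 := by
      rw [measure_preimage_add_right]; exact hC
    exact measure_eq_zero_iff_ae_notMem.1 h0
  have hcongr : ∫ x in Ioo (0:ℝ) (1-t), (u (x+t) - u x)^2
      = ∫ x in Ioo (0:ℝ) (1-t), (v (x+t) - v x)^2 := by
    apply setIntegral_congr_ae measurableSet_Ioo
    filter_upwards [hae1, hae2] with x hx1 hx2 hxm
    have hx01 : x ∈ Ioo (0:ℝ) 1 := ⟨hxm.1, by have := hxm.2; linarith⟩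
    have hxt01 : x + t ∈ Ioo (0:ℝ) 1 := ⟨by have := hxm.1; linarith, by have := hxm.2; linarith⟩
    rw [huv x hx01 hx1, huv (x+t) hxt01 hx2]
  rw [habs, hcongr]
  have hfinal : (1/4:ℝ)*(a-b)^2*t*L ≤ (N:ℝ)*(t*(a-b)^2) := by
    nlinarith [mul_nonneg (mul_nonneg (sub_nonneg.2 hNge) ht0.le) (sq_nonneg (a-b))]
  calc (1/4:ℝ) * (a-b)^2 * t * L ≤ (N:ℝ) * (t * (a-b)^2) := hfinal
  _ = ∑ j ∈ Finset.Icc 1 N, ∫ x in E j, (v (x+t) - v x)^2 := hsum.symm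
  _ = ∫ x in ⋃ j ∈ Finset.Icc 1 N, E j, (v (x+t) - v x)^2 := hbiUnion.symm
  _ ≤ ∫ x in Ioo (0:ℝ) (1-t), (v (x+t) - v x)^2 := hstep

/-- A two-valued alternating piecewise constant function on the geometric mesh
`x_j = e^{-2j}` has modulus of smoothness `ω₁(u,t)₂² ≳ |a-b|² t |ln t|`, so that
`sup_{t>0} t^{-1/2} ω₁(u,t)₂ = ∞`, i.e. `u ∉ B^{1/2}_{2,∞}(0,1)`. -/
theorem stmt2 (a b : ℝ) (hab : a ≠ b) (u : ℝ → ℝ)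
    (hu : ∀ j : ℕ, ∀ x ∈ Ioo (Real.exp (-(2*((j:ℝ)+1)))) (Real.exp (-(2*(j:ℝ)))),
        u x = if Even j then a else b)
    (M : ℝ) (hbd : ∀ x, |u x| ≤ M) :
    (∃ c > 0, ∃ t0 > 0, ∀ t : ℝ, 0 < t → t < t0 →
        c * |a - b|^2 * t * |Real.log t| ≤
          sSup {I : ℝ | ∃ h ∈ Ioc (0:ℝ) t,
            I = ∫ x in Ioo (0:ℝ) (1-h), (u (x+h) - u x)^2})
    ∧ ∀ M' : ℝ, ∃ t : ℝ, 0 < t ∧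
        M' ≤ t ^ (-(1/2 : ℝ)) * Real.sqrt
          (sSup {I : ℝ | ∃ h ∈ Ioc (0:ℝ) t,
            I = ∫ x in Ioo (0:ℝ) (1-h), (u (x+h) - u x)^2}) := by
  have hA : 0 < |a - b| := abs_pos.2 (sub_ne_zero.2 hab)
  have hbdd : ∀ t : ℝ, BddAbove {I : ℝ | ∃ h ∈ Ioc (0:ℝ) t,
      I = ∫ x in Ioo (0:ℝ) (1-h), (u (x+h) - u x)^2} := by
    intro t
    refine ⟨(2*M)^2, fun I hI => ?_⟩
    obtain ⟨h, hh, rfl⟩ := hI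
    by_cases hint : IntegrableOn (fun x => (u (x+h) - u x)^2) (Ioo (0:ℝ) (1-h)) volume
    · have hle : ∫ x in Ioo (0:ℝ) (1-h), (u (x+h) - u x)^2
          ≤ ∫ _x in Ioo (0:ℝ) (1-h), (2*M)^2 := by
        apply setIntegral_mono_on hint
          (integrableOn_const measure_Ioo_lt_top.ne) measurableSet_Ioo
        intro x _
        have h1 := abs_le.1 (hbd (x+h))
        have h2 := abs_le.1 (hbd x)
        nlinarith [h1.1, h1.2, h2.1, h2.2]
      have hvol : (volume (Ioo (0:ℝ) (1-h))).toReal ≤ 1 := by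
        rw [Real.volume_Ioo, sub_zero]
        rcases le_or_gt (1-h) 0 with hc | hc
        · simp [ENNReal.ofReal_eq_zero.2 hc]
        · rw [ENNReal.toReal_ofReal hc.le]; linarith [hh.1]
      refine hle.trans ?_
      rw [setIntegral_const, smul_eq_mul]
      exact mul_le_of_le_one_left (sq_nonneg _) hvol
    · rw [integral_undef hint]
      positivity
  have hmain : ∀ t : ℝ, 0 < t → t < Real.exp (-8:ℝ) →
      (1/4:ℝ) * |a - b|^2 * t * |Real.log t| ≤
        sSup {I : ℝ | ∃ h ∈ Ioc (0:ℝ) t,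
          I = ∫ x in Ioo (0:ℝ) (1-h), (u (x+h) - u x)^2} := by
    intro t ht0 ht1
    have hmem : (∫ x in Ioo (0:ℝ) (1-t), (u (x+t) - u x)^2) ∈
        {I : ℝ | ∃ h ∈ Ioc (0:ℝ) t,
          I = ∫ x in Ioo (0:ℝ) (1-h), (u (x+h) - u x)^2} :=
      ⟨t, ⟨ht0, le_refl t⟩, rfl⟩
    have hkey := key_lower a b u hu t ht0 ht1
    have hsup := le_csSup (hbdd t) hmem
    rw [sq_abs]
    linarith
  refine ⟨⟨1/4, by norm_num, Real.exp (-8:ℝ), Real.exp_pos _, hmain⟩, ?_⟩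
  intro M'
  have hA2 : (0:ℝ) < |a - b|^2 := by positivity
  set L : ℝ := max 9 (4*M'^2/|a-b|^2 + 9) with hLdef
  have hL9 : (9:ℝ) ≤ L := le_max_left _ _
  have hLM : 4*M'^2/|a-b|^2 ≤ L := by
    have := le_max_right (9:ℝ) (4*M'^2/|a-b|^2 + 9)
    rw [← hLdef] at this
    linarith
  refine ⟨Real.exp (-L), Real.exp_pos _, ?_⟩
  have ht0 : (0:ℝ) < Real.exp (-L) := Real.exp_pos _
  have ht1 : Real.exp (-L) < Real.exp (-8:ℝ) := Real.exp_lt_exp.2 (by linarith)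
  have hlow := hmain (Real.exp (-L)) ht0 ht1
  have habs : |Real.log (Real.exp (-L))| = L := by
    rw [Real.log_exp, abs_neg, abs_of_pos (by linarith : (0:ℝ) < L)]
  rw [habs] at hlow
  set Ssup := sSup {I : ℝ | ∃ h ∈ Ioc (0:ℝ) (Real.exp (-L)),
      I = ∫ x in Ioo (0:ℝ) (1-h), (u (x+h) - u x)^2} with hSdef
  have hlow0 : (0:ℝ) ≤ (1/4:ℝ) * |a - b|^2 * Real.exp (-L) * L :=
    mul_nonneg (mul_nonneg (mul_nonneg (by norm_num) hA2.le) ht0.le) (by linarith)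
  have hS0 : (0:ℝ) ≤ Ssup := hlow0.trans hlow
  have hrpow : Real.exp (-L) ^ (-(1/2:ℝ)) = (Real.sqrt (Real.exp (-L)))⁻¹ := by
    rw [Real.rpow_neg ht0.le, Real.sqrt_eq_rpow]
  rw [hrpow]
  have hst : 0 < Real.sqrt (Real.exp (-L)) := Real.sqrt_pos.2 ht0
  rw [inv_mul_eq_div, le_div_iff₀ hst]
  rcases le_or_gt (M' * Real.sqrt (Real.exp (-L))) 0 with hc | hc
  · exact hc.trans (Real.sqrt_nonneg _)
  · rw [Real.le_sqrt hc.le hS0]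
    have hsq : (M' * Real.sqrt (Real.exp (-L)))^2 = M'^2 * Real.exp (-L) := by
      rw [mul_pow, Real.sq_sqrt ht0.le]
    rw [hsq]
    have h4 : 4*M'^2 ≤ L * |a-b|^2 := by
      have := (div_le_iff₀ hA2).1 hLM
      linarith
    nlinarith [ht0.le]
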